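/- Theorem 3 (ELRT achieves bounded regret for N demand models). Let i ∈ Fin N be the true demand model and consider a pricing process under model i following the ELRT policy. For each h ≠ i set a_h = min over k ∈ Fin N of I(q i k ‖ q h k) (so a_h > 0 by the non-uninformative condition), let m_h and M_h be the minimum and maximum over k ∈ Fin N and y ∈ {0,1} of log(f i k y / f h k y), and set C_h = (M_h − m_h)²/(2 a_h²). Then for every horizon T ≥ 1, E[#{t : 1 ≤ t ≤ T, a_t ≠ i}] ≤ 1 + Σ_{h ≠ i} C_h ≤ 1 + (N − 1) · max_{h ≠ i} C_h; consequently, for revenues r : Fin N → Fin N → ℝ with r i i ≥ r i k for all k, the regret Δ_i(T) = T · r i i − E[Σ_{t=1}^T r i (a_t)] is bounded by a constant independent of T. -/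

import Mathlib

open MeasureTheory ProbabilityTheory Finset Real

noncomputable section

/-- Probability of outcome `y ∈ {0,1}` under a Bernoulli distribution with success
probability `p`:  `f p y = p^y (1-p)^(1-y)`. -/
def bern (p : ℝ) (y : ℕ) : ℝ := p ^ y * (1 - p) ^ (1 - y)

/-- The Kullback–Leibler divergence between Bernoulli(α) and Bernoulli(β). -/
def klBern (α β : ℝ) : ℝ :=
  α * Real.log (α / β) + (1 - α) * Real.log ((1 - α) / (1 - β))

variable {Ω : Type*} {mΩ : MeasurableSpace Ω} {N : ℕ}

/-- The pairwise (unnormalized) log-likelihood statistic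
`L_{i,h}(t) = ∑_{j=1}^t log (f_i^{a_j}(y_j) / f_h^{a_j}(y_j))`, with `L_{i,h}(0) = 0`. -/
def LLRN (q : Fin N → Fin N → ℝ) (a : ℕ → Ω → Fin N) (y : ℕ → Ω → ℕ)
    (i h : Fin N) (t : ℕ) (ω : Ω) : ℝ :=
  ∑ j ∈ Finset.Icc 1 t,
    Real.log (bern (q i (a j ω)) (y j ω) / bern (q h (a j ω)) (y j ω))

/-- An `N`-demand-model pricing process under true demand model `i`: actions `a t` are
`ℱ (t-1)`-measurable, outcomes `y t ∈ {0,1}` are `ℱ t`-measurable, and the conditional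
probability of a successful sale at time `t` given the past is `q i (a t)` a.s. -/
structure IsPricingProcessN (μ : Measure Ω) (ℱ : Filtration ℕ mΩ)
    (q : Fin N → Fin N → ℝ) (i : Fin N) (a : ℕ → Ω → Fin N) (y : ℕ → Ω → ℕ) : Prop where
  meas_a : ∀ t, 1 ≤ t → Measurable[ℱ (t - 1)] (a t)
  meas_y : ∀ t, 1 ≤ t → Measurable[ℱ t] (y t)
  y_range : ∀ t, 1 ≤ t → ∀ ω, y t ω = 0 ∨ y t ω = 1
  sale_prob : ∀ t, 1 ≤ t →
    μ[Set.indicator {ω | y t ω = 1} (fun _ => (1 : ℝ)) | ℱ (t - 1)]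
      =ᵐ[μ] fun ω => q i (a t ω)

/-- The ELRT policy: for `t ≥ 1`, `a (t+1) = k` whenever `k` is an index with
`L_{k,j}(t) > 0` for every `j ≠ k` (an arbitrary choice is made if no such `k` exists). -/
def IsELRT (q : Fin N → Fin N → ℝ) (a : ℕ → Ω → Fin N) (y : ℕ → Ω → ℕ) : Prop :=
  ∀ t, 1 ≤ t → ∀ ω, ∀ k : Fin N,
    (∀ j, j ≠ k → 0 < LLRN q a y k j t ω) → a (t + 1) ω = k

/- ### Auxiliary lemmas -/

lemma klBern_pos' {α β : ℝ} (hα : α ∈ Set.Ioo (0:ℝ) 1) (hβ : β ∈ Set.Ioo (0:ℝ) 1)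
    (hne : α ≠ β) : 0 < α * Real.log (α / β) + (1 - α) * Real.log ((1 - α) / (1 - β)) := by
  obtain ⟨hα0, hα1⟩ := hα
  obtain ⟨hβ0, hβ1⟩ := hβ
  have hr1 : (β / α : ℝ) ≠ 1 := by
    intro h
    rw [div_eq_one_iff_eq (by positivity)] at h
    exact hne h.symm
  have h1 : Real.log (β / α) < β / α - 1 := Real.log_lt_sub_one_of_pos (by positivity) hr1
  have h1α : (0:ℝ) < 1 - α := by linarith
  have h1β : (0:ℝ) < 1 - β := by linarith
  have h2 : Real.log ((1 - β) / (1 - α)) ≤ (1 - β) / (1 - α) - 1 :=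
    Real.log_le_sub_one_of_pos (by positivity)
  have e1 : Real.log (α / β) = - Real.log (β / α) := by
    rw [← Real.log_inv]; congr 1; field_simp
  have e2 : Real.log ((1 - α) / (1 - β)) = - Real.log ((1 - β) / (1 - α)) := by
    rw [← Real.log_inv]; congr 1; field_simp
  rw [e1, e2]
  have hb1 : β / α - 1 = (β - α) / α := by field_simp
  have hb2 : (1 - β) / (1 - α) - 1 = (α - β) / (1 - α) := by field_simp; ring
  rw [hb1] at h1; rw [hb2] at h2
  have k1 : α * Real.log (β / α) < β - α := by
    have := mul_lt_mul_of_pos_left h1 hα0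
    rwa [mul_div_cancel₀ _ (ne_of_gt hα0)] at this
  have k2 : (1 - α) * Real.log ((1 - β) / (1 - α)) ≤ α - β := by
    have := mul_le_mul_of_nonneg_left h2 h1α.le
    rwa [mul_div_cancel₀ _ (ne_of_gt h1α)] at this
  nlinarith

lemma hoeff_core {p : ℝ} (hp0 : 0 ≤ p) (hp1 : p ≤ 1) (s : ℝ) :
    p * Real.exp s + (1 - p) ≤ Real.exp (p * s + s ^ 2 / 8) := by
  set v : ℝ → ℝ := fun x => p * Real.exp x + (1 - p) with hv_def
  have hv : ∀ x, 0 < v x := by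
    intro x
    simp only [hv_def]
    nlinarith [Real.exp_pos x, mul_nonneg hp0 (Real.exp_pos x).le]
  set pp : ℝ → ℝ := fun x => p * Real.exp x / v x with hpp_def
  have hpp0 : ∀ x, 0 ≤ pp x := fun x => div_nonneg (mul_nonneg hp0 (Real.exp_pos x).le) (hv x).le
  have hpp1 : ∀ x, pp x ≤ 1 := by
    intro x
    rw [hpp_def, div_le_one (hv x)]
    simp only [hv_def]; linarith
  have hvd : ∀ x, HasDerivAt v (p * Real.exp x) x := by
    intro x
    show HasDerivAt (fun x => p * Real.exp x + (1 - p)) _ x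
    simpa using ((Real.hasDerivAt_exp x).const_mul p).add_const (1 - p)
  have hppd : ∀ x, HasDerivAt pp (pp x * (1 - pp x)) x := by
    intro x
    have hne : v x ≠ 0 := (hv x).ne'
    have h := ((Real.hasDerivAt_exp x).const_mul p).div (hvd x) hne
    have h' : HasDerivAt pp _ x := h
    refine h'.congr_deriv (Eq.symm ?_)
    have h1 : 1 - pp x = (1 - p) / v x := by
      rw [hpp_def, eq_div_iff hne, sub_mul, div_mul_cancel₀ _ hne]
      simp only [hv_def]; ring
    rw [h1, hpp_def, div_mul_div_comm, div_eq_div_iff (by positivity) (by positivity)]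
    simp only [hv_def]
    ring
  set g : ℝ → ℝ := fun x => p + x / 4 - pp x with hg_def
  have hgd : ∀ x, HasDerivAt g (1 / 4 - pp x * (1 - pp x)) x := by
    intro x
    have h1 : HasDerivAt (fun x : ℝ => p + x / 4) (1 / 4) x := by
      simpa using ((hasDerivAt_id x).div_const 4).const_add p
    exact h1.sub (hppd x)
  have hgmono : Monotone g := by
    apply monotone_of_deriv_nonneg (fun x => (hgd x).differentiableAt)
    intro x
    rw [(hgd x).deriv]
    nlinarith [hpp0 x, hpp1 x, sq_nonneg (pp x - 1/2)]
  have hg0 : g 0 = 0 := by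
    simp [hg_def, hpp_def, hv_def, Real.exp_zero]
  set f : ℝ → ℝ := fun x => p * x + x ^ 2 / 8 - Real.log (v x) with hf_def
  have hfd : ∀ x, HasDerivAt f (g x) x := by
    intro x
    have h1 : HasDerivAt (fun y : ℝ => p * y) p x := by
      simpa using (hasDerivAt_id x).const_mul p
    have h2 : HasDerivAt (fun y : ℝ => y ^ 2 / 8) (x / 4) x := by
      have h := (hasDerivAt_pow 2 x).div_const 8
      refine h.congr_deriv (Eq.symm ?_)
      ring
    have h3 : HasDerivAt (fun x => Real.log (v x)) (pp x) x := by
      simpa [hpp_def] using (hvd x).log (hv x).ne'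
    exact (h1.add h2).sub h3
  have hf0 : f 0 = 0 := by simp [hf_def, hv_def, Real.exp_zero]
  have hfnonneg : ∀ x, 0 ≤ f x := by
    intro x
    have hdiff : Differentiable ℝ f := fun x => (hfd x).differentiableAt
    rcases le_total 0 x with hx | hx
    · have hm : MonotoneOn f (Set.Ici 0) :=
        monotoneOn_of_deriv_nonneg (convex_Ici 0) hdiff.continuous.continuousOn
          hdiff.differentiableOn
          (fun z hz => by
            rw [(hfd z).deriv, ← hg0]
            exact hgmono (le_of_lt (by simpa using hz)))
      have := hm Set.self_mem_Ici (Set.mem_Ici.mpr hx) hx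
      rwa [hf0] at this
    · have hm : AntitoneOn f (Set.Iic 0) :=
        antitoneOn_of_deriv_nonpos (convex_Iic 0) hdiff.continuous.continuousOn
          hdiff.differentiableOn
          (fun z hz => by
            rw [(hfd z).deriv, ← hg0]
            exact hgmono (le_of_lt (by simpa using hz)))
      have := hm (Set.mem_Iic.mpr hx) Set.self_mem_Iic hx
      rwa [hf0] at this
  have hx := hfnonneg s
  have hlog : Real.log (v s) ≤ p * s + s ^ 2 / 8 := by
    simp only [hf_def] at hx; linarith
  calc p * Real.exp s + (1 - p) = v s := rfl
    _ = Real.exp (Real.log (v s)) := (Real.exp_log (hv s)).symm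
    _ ≤ _ := Real.exp_le_exp.mpr hlog

lemma two_point_mgf {p : ℝ} (hp0 : 0 ≤ p) (hp1 : p ≤ 1) (A B t : ℝ) :
    p * Real.exp (t * A) + (1 - p) * Real.exp (t * B) ≤
      Real.exp (t * (p * A + (1 - p) * B) + t ^ 2 * (B - A) ^ 2 / 8) := by
  have h := hoeff_core hp0 hp1 (t * (A - B))
  have hB := Real.exp_pos (t * B)
  have h2 := mul_le_mul_of_nonneg_right h hB.le
  calc p * Real.exp (t * A) + (1 - p) * Real.exp (t * B)
      = (p * Real.exp (t * (A - B)) + (1 - p)) * Real.exp (t * B) := by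
        rw [add_mul, mul_assoc, ← Real.exp_add]
        ring_nf
    _ ≤ Real.exp (p * (t * (A - B)) + (t * (A - B)) ^ 2 / 8) * Real.exp (t * B) := h2
    _ = Real.exp (t * (p * A + (1 - p) * B) + t ^ 2 * (B - A) ^ 2 / 8) := by
        rw [← Real.exp_add]
        ring_nf

lemma geom_tail_le {c : ℝ} (hc : 0 < c) (n : ℕ) :
    ∑ s ∈ Finset.Icc 1 n, Real.exp (-c) ^ s ≤ 1 / c := by
  set r := Real.exp (-c) with hr_def
  have hr0 : 0 < r := Real.exp_pos _
  have hr1 : r < 1 := by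
    rw [hr_def, ← Real.exp_zero]
    exact Real.exp_lt_exp.mpr (by linarith)
  have h1r : (0:ℝ) < 1 - r := by linarith
  have key2 : ∀ m : ℕ, ∑ s ∈ Finset.Icc 1 m, r ^ s ≤ (r - r ^ (m+1)) / (1 - r) := by
    intro m
    induction m with
    | zero =>
      simp only [show Finset.Icc 1 0 = (∅ : Finset ℕ) by rfl, Finset.sum_empty, pow_one]
      simp
    | succ k ih =>
      rw [Finset.sum_Icc_succ_top (by omega)]
      have he : (r - r ^ (k+1+1)) / (1 - r) = (r - r ^ (k+1)) / (1 - r) + r ^ (k+1) := by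
        field_simp
        ring
      rw [he]
      linarith
  have key : ∀ m : ℕ, ∑ s ∈ Finset.Icc 1 m, r ^ s ≤ r / (1 - r) := by
    intro m
    exact (key2 m).trans (div_le_div_of_nonneg_right (by nlinarith [pow_pos hr0 (m+1)]) h1r.le)
  have hec : c + 1 ≤ Real.exp c := by linarith [Real.add_one_le_exp c]
  have hre : r * Real.exp c = 1 := by rw [hr_def, ← Real.exp_add]; simp
  have hrc : r * (c + 1) ≤ 1 := by nlinarith
  calc ∑ s ∈ Finset.Icc 1 n, r ^ s ≤ r / (1 - r) := key n
    _ ≤ 1 / c := by rw [div_le_div_iff₀ h1r hc]; nlinarith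

lemma integrable_of_bdd {Ω : Type*} [MeasurableSpace Ω] {μ : MeasureTheory.Measure Ω}
    [MeasureTheory.IsFiniteMeasure μ] {f : Ω → ℝ}
    (hf : MeasureTheory.AEStronglyMeasurable f μ) (C : ℝ) (h : ∀ ω, |f ω| ≤ C) :
    MeasureTheory.Integrable f μ :=
  (MeasureTheory.integrable_const C).mono' hf (Filter.Eventually.of_forall (fun ω => by
    simpa [Real.norm_eq_abs] using h ω))

/-- **Theorem 3 (ELRT achieves bounded regret for `N` demand models).** Here there are
`N + 2 ≥ 2` demand models. If the true demand model is `i`, then `a_h > 0` for every `h ≠ i`,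
the expected number of times `t ∈ {1,…,T}` at which the ELRT policy selects a suboptimal arm
is at most `1 + ∑_{h ≠ i} C_h ≤ 1 + (N+1) · max_{h ≠ i} C_h` uniformly in the horizon `T`,
and consequently the regret is bounded by a constant independent of `T`. -/
theorem elrt_bounded_regret
    (μ : Measure Ω) [IsProbabilityMeasure μ] (ℱ : Filtration ℕ mΩ)
    (q : Fin (N + 2) → Fin (N + 2) → ℝ)
    (hq : ∀ i k, q i k ∈ Set.Ioo (0 : ℝ) 1)
    (hni : ∀ j h, j ≠ h → ∀ k, q j k ≠ q h k)
    (i : Fin (N + 2)) (a : ℕ → Ω → Fin (N + 2)) (y : ℕ → Ω → ℕ)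
    (hproc : IsPricingProcessN μ ℱ q i a y)
    (hpol : IsELRT q a y)
    (r : Fin (N + 2) → Fin (N + 2) → ℝ)
    (hr : ∀ k, r i k ≤ r i i)
    (aH mH MH C : Fin (N + 2) → ℝ)
    (haH : ∀ h, h ≠ i → aH h = Finset.univ.inf' ⟨0, Finset.mem_univ 0⟩
      (fun k : Fin (N + 2) => klBern (q i k) (q h k)))
    (hmH : ∀ h, h ≠ i → mH h = Finset.univ.inf' ⟨(0, 0), Finset.mem_univ _⟩
      (fun p : Fin (N + 2) × Fin 2 =>
        Real.log (bern (q i p.1) (p.2 : ℕ) / bern (q h p.1) (p.2 : ℕ))))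
    (hMH : ∀ h, h ≠ i → MH h = Finset.univ.sup' ⟨(0, 0), Finset.mem_univ _⟩
      (fun p : Fin (N + 2) × Fin 2 =>
        Real.log (bern (q i p.1) (p.2 : ℕ) / bern (q h p.1) (p.2 : ℕ))))
    (hC : ∀ h, h ≠ i → C h = (MH h - mH h) ^ 2 / (2 * (aH h) ^ 2)) :
    (∀ h, h ≠ i → 0 < aH h) ∧
      (∀ T : ℕ, 1 ≤ T →
        (∫ ω, (((Finset.Icc 1 T).filter (fun t => a t ω ≠ i)).card : ℝ) ∂μ)
          ≤ 1 + ∑ h ∈ Finset.univ.erase i, C h) ∧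
      (1 + ∑ h ∈ Finset.univ.erase i, C h
        ≤ 1 + ((N : ℝ) + 1) * (Finset.univ.erase i).sup'
            (by obtain ⟨j, hj⟩ := exists_ne i
                exact ⟨j, Finset.mem_erase.mpr ⟨hj, Finset.mem_univ j⟩⟩) C) ∧
      (∃ B : ℝ, ∀ T : ℕ, 1 ≤ T →
        (T : ℝ) * r i i - ∫ ω, ∑ t ∈ Finset.Icc 1 T, r i (a t ω) ∂μ ≤ B) := by

  classical
  have hle : ∀ s : ℕ, ℱ s ≤ mΩ := fun s => ℱ.le s
  have haHpos : ∀ h, h ≠ i → 0 < aH h := by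
    intro h hh
    rw [haH h hh]; refine (Finset.lt_inf'_iff _).2 ?_
    intro k _
    exact klBern_pos' (hq i k) (hq h k) (hni i h (Ne.symm hh) k)
  have hLmeas : ∀ (h : Fin (N+2)) (t : ℕ), Measurable[ℱ t] (LLRN q a y i h t) := by
    intro h t
    show Measurable[ℱ t] fun ω => ∑ j ∈ Finset.Icc 1 t,
      Real.log (bern (q i (a j ω)) (y j ω) / bern (q h (a j ω)) (y j ω))
    apply Finset.measurable_sum
    intro j hj
    rw [Finset.mem_Icc] at hj
    have ha : Measurable[ℱ t] (a j) :=
      (hproc.meas_a j hj.1).mono (ℱ.mono (by omega)) le_rfl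
    have hy : Measurable[ℱ t] (y j) :=
      (hproc.meas_y j hj.1).mono (ℱ.mono hj.2) le_rfl
    exact (Measurable.of_discrete
      (f := fun p : Fin (N+2) × ℕ =>
        Real.log (bern (q i p.1) p.2 / bern (q h p.1) p.2))).comp (ha.prodMk hy)
  -- the concentration bound for each wrong model h
  have perh : ∀ h, h ≠ i →
      (0 < 2 * aH h ^ 2 / (MH h - mH h) ^ 2) ∧
      ∀ t : ℕ, (μ {ω | LLRN q a y i h t ω ≤ 0}).toReal
        ≤ Real.exp (-(2 * aH h ^ 2 / (MH h - mH h) ^ 2)) ^ t := by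
    intro h hh
    obtain ⟨A, hA_def⟩ : ∃ A : Fin (N+2) → ℝ, A = fun k => Real.log (q i k / q h k) := ⟨_, rfl⟩
    obtain ⟨B, hB_def⟩ : ∃ B : Fin (N+2) → ℝ,
      B = fun k => Real.log ((1 - q i k) / (1 - q h k)) := ⟨_, rfl⟩
    have hbern1 : ∀ k, Real.log (bern (q i k) 1 / bern (q h k) 1) = A k := by
      intro k; rw [hA_def]; norm_num [bern]
    have hbern0 : ∀ k, Real.log (bern (q i k) 0 / bern (q h k) 0) = B k := by
      intro k; rw [hB_def]; norm_num [bern]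
    have hpair1 : ∀ k : Fin (N+2),
        (fun p : Fin (N + 2) × Fin 2 =>
          Real.log (bern (q i p.1) (p.2 : ℕ) / bern (q h p.1) (p.2 : ℕ))) (k, (1 : Fin 2)) = A k := by
      intro k
      have h1 : ((1 : Fin 2) : ℕ) = 1 := rfl
      simp only [h1]
      exact hbern1 k
    have hpair0 : ∀ k : Fin (N+2),
        (fun p : Fin (N + 2) × Fin 2 =>
          Real.log (bern (q i p.1) (p.2 : ℕ) / bern (q h p.1) (p.2 : ℕ))) (k, (0 : Fin 2)) = B k := by
      intro k
      have h0 : ((0 : Fin 2) : ℕ) = 0 := rfl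
      simp only [h0]
      exact hbern0 k
    have hAub : ∀ k, A k ≤ MH h := by
      intro k
      rw [hMH h hh]
      exact le_trans (le_of_eq (hpair1 k).symm)
        (Finset.le_sup' (fun p : Fin (N + 2) × Fin 2 =>
          Real.log (bern (q i p.1) (p.2 : ℕ) / bern (q h p.1) (p.2 : ℕ))) (Finset.mem_univ (k, (1 : Fin 2))))
    have hAlb : ∀ k, mH h ≤ A k := by
      intro k
      rw [hmH h hh]
      exact le_trans (Finset.inf'_le (fun p : Fin (N + 2) × Fin 2 =>
          Real.log (bern (q i p.1) (p.2 : ℕ) / bern (q h p.1) (p.2 : ℕ))) (Finset.mem_univ (k, (1 : Fin 2))))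
        (le_of_eq (hpair1 k))
    have hBub : ∀ k, B k ≤ MH h := by
      intro k
      rw [hMH h hh]
      exact le_trans (le_of_eq (hpair0 k).symm)
        (Finset.le_sup' (fun p : Fin (N + 2) × Fin 2 =>
          Real.log (bern (q i p.1) (p.2 : ℕ) / bern (q h p.1) (p.2 : ℕ))) (Finset.mem_univ (k, (0 : Fin 2))))
    have hBlb : ∀ k, mH h ≤ B k := by
      intro k
      rw [hmH h hh]
      exact le_trans (Finset.inf'_le (fun p : Fin (N + 2) × Fin 2 =>
          Real.log (bern (q i p.1) (p.2 : ℕ) / bern (q h p.1) (p.2 : ℕ))) (Finset.mem_univ (k, (0 : Fin 2))))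
        (le_of_eq (hpair0 k))
    have hklb : ∀ k, aH h ≤ q i k * A k + (1 - q i k) * B k := by
      intro k
      rw [haH h hh, hA_def, hB_def]
      exact Finset.inf'_le _ (Finset.mem_univ k)
    have hbpos : 0 < MH h - mH h := by
      have h1 : 0 < q i 0 * A 0 + (1 - q i 0) * B 0 := by
        rw [hA_def, hB_def]
        exact klBern_pos' (hq i 0) (hq h 0) (hni i h (Ne.symm hh) 0)
      have h2 : 0 < q h 0 * (- A 0) + (1 - q h 0) * (- B 0) := by
        have e1 : -A 0 = Real.log (q h 0 / q i 0) := by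
          rw [hA_def, ← Real.log_inv, inv_div]
        have e2 : -B 0 = Real.log ((1 - q h 0) / (1 - q i 0)) := by
          rw [hB_def, ← Real.log_inv, inv_div]
        rw [e1, e2]
        exact klBern_pos' (hq h 0) (hq i 0) (hni h i hh 0)
      by_contra hbn
      push_neg at hbn
      have hA1 := hAub 0; have hA2 := hAlb 0; have hB1 := hBub 0; have hB2 := hBlb 0
      have hAB : A 0 = B 0 := le_antisymm (by linarith) (by linarith)
      rw [hAB] at h1 h2
      obtain ⟨hi0, hi1⟩ := hq i 0
      obtain ⟨hh0, hh1⟩ := hq h 0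
      nlinarith
    obtain ⟨lam, hlam_def⟩ : ∃ l : ℝ, l = 4 * aH h / (MH h - mH h) ^ 2 := ⟨_, rfl⟩
    have haa := haHpos h hh
    have hlam : 0 < lam := by rw [hlam_def]; positivity
    obtain ⟨c, hc_def⟩ : ∃ c : ℝ, c = 2 * aH h ^ 2 / (MH h - mH h) ^ 2 := ⟨_, rfl⟩
    have hcpos : 0 < c := by rw [hc_def]; positivity
    rw [← hc_def]
    refine ⟨hcpos, ?_⟩
    have harm : ∀ k, q i k * Real.exp (-(lam * A k)) + (1 - q i k) * Real.exp (-(lam * B k))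
        ≤ Real.exp (-c) := by
      intro k
      have h2 := two_point_mgf (hq i k).1.le (hq i k).2.le (A k) (B k) (-lam)
      rw [neg_mul, neg_mul] at h2
      refine h2.trans (Real.exp_le_exp.mpr ?_)
      have hkl := hklb k
      have hA1 := hAub k; have hA2 := hAlb k; have hB1 := hBub k; have hB2 := hBlb k
      have hBA : (B k - A k) ^ 2 ≤ (MH h - mH h) ^ 2 := by nlinarith
      have heq : -(lam * aH h) + lam ^ 2 * (MH h - mH h) ^ 2 / 8 = -c := by
        rw [hlam_def, hc_def]
        field_simp
        ring
      have p1 : lam * aH h ≤ lam * (q i k * A k + (1 - q i k) * B k) :=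
        mul_le_mul_of_nonneg_left hkl hlam.le
      have p2 : lam ^ 2 * (B k - A k) ^ 2 ≤ lam ^ 2 * (MH h - mH h) ^ 2 :=
        mul_le_mul_of_nonneg_left hBA (sq_nonneg lam)
      nlinarith
    obtain ⟨W, hW_def⟩ : ∃ W : ℕ → Ω → ℝ,
      W = fun t ω => Real.exp (-(lam * LLRN q a y i h t ω)) := ⟨_, rfl⟩
    have hWpos : ∀ t ω, 0 < W t ω := by
      intro t ω; simp only [hW_def]; exact Real.exp_pos _
    have hWmeasF : ∀ t, Measurable[ℱ t] (W t) := by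
      intro t
      simp only [hW_def]
      exact (((hLmeas h t).const_mul lam).neg).exp
    have hXmem : ∀ j, 1 ≤ j → ∀ ω,
        mH h ≤ Real.log (bern (q i (a j ω)) (y j ω) / bern (q h (a j ω)) (y j ω)) ∧
        Real.log (bern (q i (a j ω)) (y j ω) / bern (q h (a j ω)) (y j ω)) ≤ MH h := by
      intro j hj ω
      rcases hproc.y_range j hj ω with h0 | h1
      · rw [h0, hbern0]
        exact ⟨hBlb _, hBub _⟩
      · rw [h1, hbern1]
        exact ⟨hAlb _, hAub _⟩
    have hLlb : ∀ (t : ℕ) ω, (t : ℝ) * mH h ≤ LLRN q a y i h t ω := by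
      intro t ω
      have hs : (Finset.Icc 1 t).card • mH h ≤ ∑ j ∈ Finset.Icc 1 t,
          Real.log (bern (q i (a j ω)) (y j ω) / bern (q h (a j ω)) (y j ω)) :=
        Finset.card_nsmul_le_sum _ _ _ (fun j hj => (hXmem j (Finset.mem_Icc.mp hj).1 ω).1)
      have hcardt : (Finset.Icc 1 t).card = t := by
        rw [Nat.card_Icc]; omega
      rw [hcardt, nsmul_eq_mul] at hs
      exact hs
    have hWub : ∀ t ω, |W t ω| ≤ Real.exp (-(lam * ((t:ℝ) * mH h))) := by
      intro t ω
      simp only [hW_def]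
      rw [abs_of_pos (Real.exp_pos _)]
      apply Real.exp_le_exp.mpr
      nlinarith [mul_le_mul_of_nonneg_left (hLlb t ω) hlam.le]
    have hWint : ∀ t, Integrable (W t) μ := fun t =>
      integrable_of_bdd ((hWmeasF t).mono (hle t) le_rfl).aestronglyMeasurable _ (hWub t)
    obtain ⟨G, hG_def⟩ : ∃ G : Fin (N+2) → ℝ, G = fun k => Real.exp (-(lam * B k)) := ⟨_, rfl⟩
    obtain ⟨D, hD_def⟩ : ∃ D : Fin (N+2) → ℝ,
      D = fun k => Real.exp (-(lam * A k)) - G k := ⟨_, rfl⟩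
    obtain ⟨CG, hCG⟩ : ∃ CG : ℝ, ∀ k, |G k| ≤ CG :=
      ⟨Finset.univ.sup' ⟨0, Finset.mem_univ 0⟩ (fun k => |G k|),
        fun k => Finset.le_sup' (fun k => |G k|) (Finset.mem_univ k)⟩
    obtain ⟨CD, hCD⟩ : ∃ CD : ℝ, ∀ k, |D k| ≤ CD :=
      ⟨Finset.univ.sup' ⟨0, Finset.mem_univ 0⟩ (fun k => |D k|),
        fun k => Finset.le_sup' (fun k => |D k|) (Finset.mem_univ k)⟩
    have hCG0 : 0 ≤ CG := (abs_nonneg _).trans (hCG 0)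
    have hCD0 : 0 ≤ CD := (abs_nonneg _).trans (hCD 0)
    have hstep : ∀ t : ℕ, ∫ ω, W (t+1) ω ∂μ ≤ Real.exp (-c) * ∫ ω, W t ω ∂μ := by
      intro t
      have ht1 : (1:ℕ) ≤ t + 1 := by omega
      have haF : Measurable[ℱ t] (a (t+1)) := by
        have := hproc.meas_a (t+1) ht1
        simpa using this
      have ham : Measurable (a (t+1)) := haF.mono (hle t) le_rfl
      have hym : Measurable (y (t+1)) := (hproc.meas_y (t+1) ht1).mono (hle (t+1)) le_rfl
      have hS : MeasurableSet {ω | y (t+1) ω = 1} := hym (measurableSet_singleton 1)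
      obtain ⟨ind, hind_def⟩ : ∃ f : Ω → ℝ,
        f = Set.indicator {ω | y (t+1) ω = 1} (fun _ => (1:ℝ)) := ⟨_, rfl⟩
      have hind_meas : Measurable ind := by
        rw [hind_def]; exact measurable_const.indicator hS
      have hind_bd : ∀ ω, |ind ω| ≤ 1 := by
        intro ω
        rw [hind_def]
        by_cases hω : ω ∈ {ω | y (t+1) ω = 1}
        · rw [Set.indicator_of_mem hω]; norm_num
        · rw [Set.indicator_of_notMem hω]; norm_num
      have hGa_measF : Measurable[ℱ t] (fun ω => G (a (t+1) ω)) :=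
        (Measurable.of_discrete (f := G)).comp haF
      have hDa_measF : Measurable[ℱ t] (fun ω => D (a (t+1) ω)) :=
        (Measurable.of_discrete (f := D)).comp haF
      have hdec : ∀ ω, W (t+1) ω = W t ω * G (a (t+1) ω) + (W t ω * D (a (t+1) ω)) * ind ω := by
        intro ω
        have hsum : LLRN q a y i h (t+1) ω = LLRN q a y i h t ω +
            Real.log (bern (q i (a (t+1) ω)) (y (t+1) ω) / bern (q h (a (t+1) ω)) (y (t+1) ω)) := by
          simp only [LLRN]
          exact Finset.sum_Icc_succ_top ht1 _
        rcases hproc.y_range (t+1) ht1 ω with h0 | h1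
        · have hω : ω ∉ {ω | y (t+1) ω = 1} := by simp [h0]
          simp only [hW_def, hind_def, Set.indicator_of_notMem hω, mul_zero, add_zero]
          rw [hsum, h0, hbern0, mul_add, neg_add, Real.exp_add, hG_def]
        · have hω : ω ∈ {ω | y (t+1) ω = 1} := h1
          simp only [hW_def, hind_def, Set.indicator_of_mem hω, mul_one]
          rw [hsum, h1, hbern1, mul_add, neg_add, Real.exp_add, hD_def, hG_def]
          ring
      have hWam : Measurable (W t) := (hWmeasF t).mono (hle t) le_rfl
      have hWnn : ∀ ω, |W t ω| ≤ Real.exp (-(lam * ((t:ℝ) * mH h))) := hWub t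
      have hU1int : Integrable (fun ω => W t ω * G (a (t+1) ω)) μ := by
        apply integrable_of_bdd ((hWam.mul ((Measurable.of_discrete (f := G)).comp ham)).aestronglyMeasurable)
          (Real.exp (-(lam * ((t:ℝ) * mH h))) * CG)
        intro ω
        rw [Pi.mul_apply, abs_mul]
        exact mul_le_mul (hWnn ω) (hCG _) (abs_nonneg _) (Real.exp_pos _).le
      have hU2int : Integrable (fun ω => W t ω * D (a (t+1) ω)) μ := by
        apply integrable_of_bdd ((hWam.mul ((Measurable.of_discrete (f := D)).comp ham)).aestronglyMeasurable)
          (Real.exp (-(lam * ((t:ℝ) * mH h))) * CD)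
        intro ω
        rw [Pi.mul_apply, abs_mul]
        exact mul_le_mul (hWnn ω) (hCD _) (abs_nonneg _) (Real.exp_pos _).le
      have hU2ind_int : Integrable (fun ω => (W t ω * D (a (t+1) ω)) * ind ω) μ := by
        apply integrable_of_bdd (((hWam.mul ((Measurable.of_discrete (f := D)).comp ham)).mul hind_meas).aestronglyMeasurable)
          ((Real.exp (-(lam * ((t:ℝ) * mH h))) * CD) * 1)
        intro ω
        rw [Pi.mul_apply, Pi.mul_apply, abs_mul, abs_mul]
        apply mul_le_mul _ (hind_bd ω) (abs_nonneg _) (by positivity)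
        exact mul_le_mul (hWnn ω) (hCD _) (abs_nonneg _) (Real.exp_pos _).le
      have hU2q_int : Integrable (fun ω => (W t ω * D (a (t+1) ω)) * q i (a (t+1) ω)) μ := by
        apply integrable_of_bdd (((hWam.mul ((Measurable.of_discrete (f := D)).comp ham)).mul
          ((Measurable.of_discrete (f := fun k => q i k)).comp ham)).aestronglyMeasurable)
          ((Real.exp (-(lam * ((t:ℝ) * mH h))) * CD) * 1)
        intro ω
        simp only [Pi.mul_apply, Function.comp_apply]
        rw [abs_mul, abs_mul]
        have hq1 : |q i (a (t+1) ω)| ≤ 1 := by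
          rw [abs_of_pos (hq i (a (t+1) ω)).1]
          exact (hq i (a (t+1) ω)).2.le
        have h2 : |W t ω| * |D (a (t+1) ω)| ≤ Real.exp (-(lam * ((t:ℝ) * mH h))) * CD :=
          mul_le_mul (hWnn ω) (hCD _) (abs_nonneg _) (Real.exp_pos _).le
        nlinarith [abs_nonneg (q i (a (t+1) ω)), abs_nonneg (W t ω), abs_nonneg (D (a (t+1) ω)),
          mul_nonneg (Real.exp_pos (-(lam * ((t:ℝ) * mH h)))).le hCD0,
          mul_nonneg (abs_nonneg (W t ω)) (abs_nonneg (D (a (t+1) ω)))]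
      have hind_int : Integrable ind μ :=
        integrable_of_bdd hind_meas.aestronglyMeasurable 1 hind_bd
      have hcond : ∫ ω, (W t ω * D (a (t+1) ω)) * ind ω ∂μ
          = ∫ ω, (W t ω * D (a (t+1) ω)) * q i (a (t+1) ω) ∂μ := by
        have hsm : StronglyMeasurable[ℱ t] (fun ω => W t ω * D (a (t+1) ω)) :=
          ((hWmeasF t).mul hDa_measF).stronglyMeasurable
        have hmul := condExp_mul_of_stronglyMeasurable_left hsm (by exact hU2ind_int) hind_int
        have hsale := hproc.sale_prob (t+1) ht1
        simp only [Nat.add_sub_cancel] at hsale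
        rw [← hind_def] at hsale
        calc ∫ ω, (W t ω * D (a (t+1) ω)) * ind ω ∂μ
            = ∫ ω, (μ[(fun ω => W t ω * D (a (t+1) ω)) * ind|ℱ t]) ω ∂μ :=
              (integral_condExp (hle t)).symm
          _ = ∫ ω, ((fun ω => W t ω * D (a (t+1) ω)) * μ[ind|ℱ t]) ω ∂μ :=
              integral_congr_ae hmul
          _ = ∫ ω, (W t ω * D (a (t+1) ω)) * q i (a (t+1) ω) ∂μ := by
              apply integral_congr_ae
              filter_upwards [hsale] with ω hω
              simp only [Pi.mul_apply]
              rw [hω]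
      have hptw : ∀ ω, W t ω * G (a (t+1) ω) + (W t ω * D (a (t+1) ω)) * q i (a (t+1) ω)
          ≤ Real.exp (-c) * W t ω := by
        intro ω
        have hk := harm (a (t+1) ω)
        have e1 : W t ω * G (a (t+1) ω) + (W t ω * D (a (t+1) ω)) * q i (a (t+1) ω)
            = W t ω * (q i (a (t+1) ω) * Real.exp (-(lam * A (a (t+1) ω)))
              + (1 - q i (a (t+1) ω)) * Real.exp (-(lam * B (a (t+1) ω)))) := by
          rw [hD_def, hG_def]
          ring
        rw [e1, mul_comm (Real.exp (-c))]
        exact mul_le_mul_of_nonneg_left hk (hWpos t ω).le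
      calc ∫ ω, W (t+1) ω ∂μ
          = ∫ ω, (W t ω * G (a (t+1) ω) + (W t ω * D (a (t+1) ω)) * ind ω) ∂μ :=
            integral_congr_ae (Filter.Eventually.of_forall (fun ω => hdec ω))
        _ = (∫ ω, W t ω * G (a (t+1) ω) ∂μ) + ∫ ω, (W t ω * D (a (t+1) ω)) * ind ω ∂μ :=
            integral_add hU1int hU2ind_int
        _ = (∫ ω, W t ω * G (a (t+1) ω) ∂μ)
            + ∫ ω, (W t ω * D (a (t+1) ω)) * q i (a (t+1) ω) ∂μ := by rw [hcond]
        _ = ∫ ω, (W t ω * G (a (t+1) ω) + (W t ω * D (a (t+1) ω)) * q i (a (t+1) ω)) ∂μ :=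
            (integral_add hU1int hU2q_int).symm
        _ ≤ ∫ ω, Real.exp (-c) * W t ω ∂μ :=
            integral_mono (hU1int.add hU2q_int) ((hWint t).const_mul _) hptw
        _ = Real.exp (-c) * ∫ ω, W t ω ∂μ := integral_const_mul _ _
    have hWinit : ∫ ω, W 0 ω ∂μ = 1 := by
      have h0 : ∀ ω, W 0 ω = 1 := by
        intro ω
        simp [hW_def, LLRN]
      rw [integral_congr_ae (Filter.Eventually.of_forall h0)]
      simp
    have hWle : ∀ t, ∫ ω, W t ω ∂μ ≤ Real.exp (-c) ^ t := by
      intro t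
      induction t with
      | zero => simp [hWinit]
      | succ s ih =>
        calc ∫ ω, W (s+1) ω ∂μ ≤ Real.exp (-c) * ∫ ω, W s ω ∂μ := hstep s
          _ ≤ Real.exp (-c) * Real.exp (-c) ^ s :=
              mul_le_mul_of_nonneg_left ih (Real.exp_pos _).le
          _ = Real.exp (-c) ^ (s+1) := by ring
    intro t
    have hLt : Measurable (LLRN q a y i h t) := (hLmeas h t).mono (hle t) le_rfl
    have hSd : MeasurableSet {ω | LLRN q a y i h t ω ≤ 0} := measurableSet_le hLt measurable_const
    have hind_le : ∀ ω, Set.indicator {ω | LLRN q a y i h t ω ≤ 0} (fun _ => (1:ℝ)) ω ≤ W t ω := by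
      intro ω
      by_cases hω : ω ∈ {ω | LLRN q a y i h t ω ≤ 0}
      · rw [Set.indicator_of_mem hω]
        simp only [hW_def]
        apply Real.one_le_exp
        have hω' : LLRN q a y i h t ω ≤ 0 := hω
        nlinarith
      · rw [Set.indicator_of_notMem hω]
        exact (hWpos t ω).le
    calc (μ {ω | LLRN q a y i h t ω ≤ 0}).toReal
        = ∫ ω, Set.indicator {ω | LLRN q a y i h t ω ≤ 0} (fun _ => (1:ℝ)) ω ∂μ :=
          (integral_indicator_one hSd).symm
      _ ≤ ∫ ω, W t ω ∂μ :=
          integral_mono ((integrable_const 1).indicator hSd) (hWint t) hind_le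
      _ ≤ Real.exp (-c) ^ t := hWle t
  have hsum_h : ∀ h, h ≠ i → ∀ n : ℕ,
      ∑ t ∈ Finset.Icc 1 n, (μ {ω | LLRN q a y i h t ω ≤ 0}).toReal ≤ C h := by
    intro h hh n
    obtain ⟨hcpos, hdev⟩ := perh h hh
    calc ∑ t ∈ Finset.Icc 1 n, (μ {ω | LLRN q a y i h t ω ≤ 0}).toReal
        ≤ ∑ t ∈ Finset.Icc 1 n, Real.exp (-(2 * aH h ^ 2 / (MH h - mH h) ^ 2)) ^ t :=
          Finset.sum_le_sum (fun t _ => hdev t)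
      _ ≤ 1 / (2 * aH h ^ 2 / (MH h - mH h) ^ 2) := geom_tail_le hcpos n
      _ = C h := by rw [hC h hh, one_div_div]
  have hans : ∀ t, 1 ≤ t → MeasurableSet {ω | a t ω ≠ i} := by
    intro t ht
    have ham : Measurable (a t) := (hproc.meas_a t ht).mono (hle _) le_rfl
    exact (ham (measurableSet_singleton i)).compl
  have hcard_eq : ∀ T : ℕ, ∀ ω, (((Finset.Icc 1 T).filter (fun t => a t ω ≠ i)).card : ℝ)
      = ∑ t ∈ Finset.Icc 1 T, Set.indicator {ω' | a t ω' ≠ i} (fun _ => (1:ℝ)) ω := by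
    intro T ω
    rw [Finset.card_filter]
    push_cast
    refine Finset.sum_congr rfl (fun t _ => ?_)
    by_cases hti : a t ω ≠ i <;>
      simp [Set.indicator_apply, Set.mem_setOf_eq, hti]
  have hint_count : ∀ T : ℕ,
      ∫ ω, (((Finset.Icc 1 T).filter (fun t => a t ω ≠ i)).card : ℝ) ∂μ
        = ∑ t ∈ Finset.Icc 1 T, (μ {ω | a t ω ≠ i}).toReal := by
    intro T
    rw [integral_congr_ae (Filter.Eventually.of_forall (hcard_eq T))]
    rw [integral_finset_sum _
      (fun t ht => (integrable_const (1:ℝ)).indicator (hans t (Finset.mem_Icc.mp ht).1))]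
    exact Finset.sum_congr rfl (fun t ht => integral_indicator_one (hans t (Finset.mem_Icc.mp ht).1))
  have hcount : ∀ T : ℕ, 1 ≤ T →
      ∫ ω, (((Finset.Icc 1 T).filter (fun t => a t ω ≠ i)).card : ℝ) ∂μ
        ≤ 1 + ∑ h ∈ Finset.univ.erase i, C h := by
    intro T hT
    rw [hint_count T]
    have hsplit : Finset.Icc 1 T = insert 1 (Finset.Icc 2 T) := by
      ext x
      simp only [Finset.mem_Icc, Finset.mem_insert]
      omega
    rw [hsplit, Finset.sum_insert (by rw [Finset.mem_Icc]; omega)]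
    have h1 : (μ {ω | a 1 ω ≠ i}).toReal ≤ 1 := by
      calc (μ {ω | a 1 ω ≠ i}).toReal ≤ (μ Set.univ).toReal :=
            ENNReal.toReal_mono (measure_ne_top μ _) (measure_mono (Set.subset_univ _))
        _ = 1 := by simp
    have h2 : ∑ t ∈ Finset.Icc 2 T, (μ {ω | a t ω ≠ i}).toReal
        ≤ ∑ h ∈ Finset.univ.erase i, C h := by
      have hsub : ∀ t, 2 ≤ t → {ω | a t ω ≠ i} ⊆
          ⋃ h ∈ Finset.univ.erase i, {ω | LLRN q a y i h (t-1) ω ≤ 0} := by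
        intro t ht ω hω
        by_contra hnot
        simp only [Set.mem_iUnion, Set.mem_setOf_eq, exists_prop] at hnot
        push_neg at hnot
        apply hω
        have happ := hpol (t-1) (by omega) ω i
          (fun j hj => hnot j (Finset.mem_erase.mpr ⟨hj, Finset.mem_univ j⟩))
        have ht' : t - 1 + 1 = t := by omega
        rwa [ht'] at happ
      have hper : ∀ t, 2 ≤ t → (μ {ω | a t ω ≠ i}).toReal
          ≤ ∑ h ∈ Finset.univ.erase i, (μ {ω | LLRN q a y i h (t-1) ω ≤ 0}).toReal := by
        intro t ht
        have hm : μ {ω | a t ω ≠ i}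
            ≤ ∑ h ∈ Finset.univ.erase i, μ {ω | LLRN q a y i h (t-1) ω ≤ 0} :=
          (measure_mono (hsub t ht)).trans (measure_biUnion_finset_le _ _)
        calc (μ {ω | a t ω ≠ i}).toReal
            ≤ (∑ h ∈ Finset.univ.erase i, μ {ω | LLRN q a y i h (t-1) ω ≤ 0}).toReal :=
              ENNReal.toReal_mono
                ((ENNReal.sum_lt_top.mpr (fun h _ => measure_lt_top μ _)).ne) hm
          _ = ∑ h ∈ Finset.univ.erase i, (μ {ω | LLRN q a y i h (t-1) ω ≤ 0}).toReal :=
              ENNReal.toReal_sum (fun h _ => measure_ne_top μ _)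
      calc ∑ t ∈ Finset.Icc 2 T, (μ {ω | a t ω ≠ i}).toReal
          ≤ ∑ t ∈ Finset.Icc 2 T, ∑ h ∈ Finset.univ.erase i,
              (μ {ω | LLRN q a y i h (t-1) ω ≤ 0}).toReal :=
            Finset.sum_le_sum (fun t ht => hper t (Finset.mem_Icc.mp ht).1)
        _ = ∑ h ∈ Finset.univ.erase i, ∑ t ∈ Finset.Icc 2 T,
              (μ {ω | LLRN q a y i h (t-1) ω ≤ 0}).toReal := Finset.sum_comm
        _ ≤ ∑ h ∈ Finset.univ.erase i, C h := by
            apply Finset.sum_le_sum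
            intro h hhE
            have hh : h ≠ i := (Finset.mem_erase.mp hhE).1
            have hre : ∑ t ∈ Finset.Icc 2 T, (μ {ω | LLRN q a y i h (t-1) ω ≤ 0}).toReal
                = ∑ s ∈ Finset.Icc 1 (T-1), (μ {ω | LLRN q a y i h s ω ≤ 0}).toReal := by
              refine Finset.sum_nbij' (fun t => t - 1) (fun s => s + 1) ?_ ?_ ?_ ?_ ?_ <;>
                intro x hx <;> simp only [Finset.mem_Icc] at hx ⊢ <;> first | omega | rfl
            rw [hre]
            exact hsum_h h hh (T-1)
    linarith
  refine ⟨haHpos, hcount, ?_, ?_⟩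
  · refine add_le_add_right ?_ 1
    have hcard : (Finset.univ.erase i).card = N + 1 := by
      rw [Finset.card_erase_of_mem (Finset.mem_univ i), Finset.card_univ, Fintype.card_fin]
      omega
    have hne : (Finset.univ.erase i).Nonempty := by
      obtain ⟨j, hj⟩ := exists_ne i
      exact ⟨j, Finset.mem_erase.mpr ⟨hj, Finset.mem_univ j⟩⟩
    refine le_trans (Finset.sum_le_card_nsmul _ _ ((Finset.univ.erase i).sup' hne C)
      (fun h hh => Finset.le_sup' C hh)) ?_
    rw [hcard, nsmul_eq_mul]
    push_cast
    exact le_rfl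
  · refine ⟨(Finset.univ.sup' ⟨i, Finset.mem_univ i⟩ (fun k => r i i - r i k)) *
      (1 + ∑ h ∈ Finset.univ.erase i, C h), ?_⟩
    intro T hT
    obtain ⟨R, hR_def⟩ : ∃ R : ℝ,
      R = Finset.univ.sup' ⟨i, Finset.mem_univ i⟩ (fun k => r i i - r i k) := ⟨_, rfl⟩
    rw [← hR_def]
    have hR0 : 0 ≤ R := by
      rw [hR_def]
      have := Finset.le_sup' (fun k : Fin (N+2) => r i i - r i k) (Finset.mem_univ i)
      simpa using this
    have hRk : ∀ k, r i i - r i k ≤ R := by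
      intro k; rw [hR_def]; exact Finset.le_sup' (fun k => r i i - r i k) (Finset.mem_univ k)
    have hint_r : Integrable (fun ω => ∑ t ∈ Finset.Icc 1 T, r i (a t ω)) μ := by
      apply integrable_finset_sum
      intro t ht
      have ham : Measurable (a t) :=
        (hproc.meas_a t (Finset.mem_Icc.mp ht).1).mono (hle _) le_rfl
      apply integrable_of_bdd ((Measurable.of_discrete (f := fun k => r i k)).comp ham).aestronglyMeasurable
        (Finset.univ.sup' ⟨i, Finset.mem_univ i⟩ (fun k => |r i k|))
      intro ω
      exact Finset.le_sup' (fun k : Fin (N+2) => |r i k|) (Finset.mem_univ (a t ω))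
    have hint_card : Integrable
        (fun ω => (((Finset.Icc 1 T).filter (fun t => a t ω ≠ i)).card : ℝ)) μ := by
      apply (integrable_finset_sum _
        (fun t ht => (integrable_const (1:ℝ)).indicator (hans t (Finset.mem_Icc.mp ht).1))).congr
      exact Filter.Eventually.of_forall (fun ω => (hcard_eq T ω).symm)
    have key : ∀ ω, ∑ t ∈ Finset.Icc 1 T, (r i i - r i (a t ω))
        ≤ R * (((Finset.Icc 1 T).filter (fun t => a t ω ≠ i)).card : ℝ) := by
      intro ω
      calc ∑ t ∈ Finset.Icc 1 T, (r i i - r i (a t ω))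
          = ∑ t ∈ (Finset.Icc 1 T).filter (fun t => a t ω ≠ i), (r i i - r i (a t ω)) := by
            refine (Finset.sum_filter_of_ne ?_).symm
            intro t ht h0 he
            exact h0 (by rw [he]; ring)
        _ ≤ ∑ t ∈ (Finset.Icc 1 T).filter (fun t => a t ω ≠ i), R :=
            Finset.sum_le_sum (fun t _ => hRk (a t ω))
        _ = (((Finset.Icc 1 T).filter (fun t => a t ω ≠ i)).card : ℝ) * R := by
            rw [Finset.sum_const, nsmul_eq_mul]
        _ = R * _ := mul_comm _ _
    have h1 : ∀ ω, ∑ t ∈ Finset.Icc 1 T, (r i i - r i (a t ω))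
        = (T:ℝ) * r i i - ∑ t ∈ Finset.Icc 1 T, r i (a t ω) := by
      intro ω
      rw [Finset.sum_sub_distrib, Finset.sum_const]
      have hcardT : (Finset.Icc 1 T).card = T := by rw [Nat.card_Icc]; omega
      rw [hcardT, nsmul_eq_mul]
    have hint_gap : Integrable (fun ω => ∑ t ∈ Finset.Icc 1 T, (r i i - r i (a t ω))) μ :=
      ((integrable_const ((T:ℝ) * r i i)).sub hint_r).congr
        (Filter.Eventually.of_forall (fun ω => (h1 ω).symm))
    have heq : ∫ ω, ∑ t ∈ Finset.Icc 1 T, (r i i - r i (a t ω)) ∂μ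
        = (T:ℝ) * r i i - ∫ ω, ∑ t ∈ Finset.Icc 1 T, r i (a t ω) ∂μ := by
      rw [integral_congr_ae (Filter.Eventually.of_forall h1)]
      rw [integral_sub (integrable_const _) hint_r]
      simp
    calc (T : ℝ) * r i i - ∫ ω, ∑ t ∈ Finset.Icc 1 T, r i (a t ω) ∂μ
        = ∫ ω, ∑ t ∈ Finset.Icc 1 T, (r i i - r i (a t ω)) ∂μ := heq.symm
      _ ≤ ∫ ω, R * (((Finset.Icc 1 T).filter (fun t => a t ω ≠ i)).card : ℝ) ∂μ :=
          integral_mono hint_gap (hint_card.const_mul R) key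
      _ = R * ∫ ω, (((Finset.Icc 1 T).filter (fun t => a t ω ≠ i)).card : ℝ) ∂μ :=
          integral_const_mul _ _
      _ ≤ R * (1 + ∑ h ∈ Finset.univ.erase i, C h) :=
          mul_le_mul_of_nonneg_left (hcount T hT) hR0
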